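/- Let Ĥ be a weakly balanced bipartite signed graph (no purely red edges), and let D be the reachability closure in H⁺ of the set D_0 of all pairs (x,y) such that some vertex z has a bicoloured edge zx and a blue edge zy. Then D contains a circuit if and only if Ĥ contains a flower. -/

import Mathlib

variable {A B : Type*}

/-- An arc of the pair digraph `H⁺` of a bipartite graph with parts `A`, `B`. -/
def PairDom (E : A → B → Prop) : (A × A) ⊕ (B × B) → (A × A) ⊕ (B × B) → Prop
  | Sum.inl (a, a'), Sum.inr (b, b') => E a b ∧ E a' b' ∧ ¬ E a b'
  | Sum.inr (b, b'), Sum.inl (a, a') => E a b ∧ E a' b' ∧ ¬ E a' b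
  | _, _ => False

/-- A circuit in a set `D` of vertices of `H⁺`: pairs
`(x_0,x_1), (x_1,x_2), …, (x_n,x_0)`, `n ≥ 1`, all in `D`. -/
def HasCircuit (D : Set ((A × A) ⊕ (B × B))) : Prop :=
  ∃ n : ℕ, 0 < n ∧
    ((∃ x : Fin (n + 1) → A, ∀ i, Sum.inl (x i, x (i + 1)) ∈ D) ∨
     (∃ x : Fin (n + 1) → B, ∀ i, Sum.inr (x i, x (i + 1)) ∈ D))

/-- The set `D_0` of pairs `(x,y)` such that for some vertex `z` (in the opposite
part), `zx` is a bicoloured edge and `zy` is a blue (unicoloured) edge. -/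
def DZero (E bic : A → B → Prop) : Set ((A × A) ⊕ (B × B)) := fun p =>
  match p with
  | Sum.inl (x, y) => ∃ z : B, bic x z ∧ E y z ∧ ¬ bic y z
  | Sum.inr (x, y) => ∃ z : A, bic z x ∧ E z y ∧ ¬ bic z y

/-- The reachability closure `D` of `D_0` in the pair digraph `H⁺`. -/
def DClosure (E bic : A → B → Prop) : Set ((A × A) ⊕ (B × B)) :=
  {q | ∃ p ∈ DZero E bic, Relation.ReflTransGen (PairDom E) p q}

/-- The edge relation of the underlying graph on the vertex set `A ⊕ B`. -/
def EdgeSum (E : A → B → Prop) : A ⊕ B → A ⊕ B → Prop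
  | Sum.inl a, Sum.inr b => E a b
  | Sum.inr b, Sum.inl a => E a b
  | _, _ => False

/-- A petal in a signed graph with edge relation `E` and bicoloured edges `bic`:
a pair of walks `x, l_1, …, l_k` and `x, u_1, …, u_k` such that `xl_1` is bicoloured,
`xu_1` is blue, and `l_iu_{i+1}` is not an edge for `i = 1, …, k-1`. -/
def IsPetal {V : Type*} (E bic : V → V → Prop) (x : V) (l u : ℕ → V) (k : ℕ) : Prop :=
  0 < k ∧ bic x (l 1) ∧ (E x (u 1) ∧ ¬ bic x (u 1)) ∧
    ∀ i, 1 ≤ i → i ≤ k - 1 →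
      E (l i) (l (i + 1)) ∧ E (u i) (u (i + 1)) ∧ ¬ E (l i) (u (i + 1))

/-- A flower: a cyclically indexed collection of petals in which the upper terminal
of each petal equals the lower terminal of the next petal. -/
def HasFlower {V : Type*} (E bic : V → V → Prop) : Prop :=
  ∃ (n : ℕ) (x : Fin (n + 1) → V) (l u : Fin (n + 1) → ℕ → V) (k : Fin (n + 1) → ℕ),
    (∀ i, IsPetal E bic (x i) (l i) (u i) (k i)) ∧
    ∀ i : Fin (n + 1), u i (k i) = l (i + 1) (k (i + 1))

/-- Map a vertex of `H⁺` to the corresponding pair of vertices of `A ⊕ B`. -/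
def toV : (A × A) ⊕ (B × B) → (A ⊕ B) × (A ⊕ B)
  | Sum.inl (a, a') => (Sum.inl a, Sum.inl a')
  | Sum.inr (b, b') => (Sum.inr b, Sum.inr b')

lemma petal_extend {V : Type*} {E bic : V → V → Prop} {x : V} {l u : ℕ → V} {k : ℕ}
    (h : IsPetal E bic x l u k) {w1 w2 : V}
    (e1 : E (l k) w1) (e2 : E (u k) w2) (ne : ¬ E (l k) w2) :
    IsPetal E bic x (fun i => if i = k + 1 then w1 else l i)
      (fun i => if i = k + 1 then w2 else u i) (k + 1) := by
  obtain ⟨hk, hb, hu1, hmid⟩ := h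
  refine ⟨by omega, ?_, ?_, ?_⟩
  · simpa [show (1:ℕ) ≠ k + 1 by omega, show k ≠ 0 by omega] using hb
  · simpa [show (1:ℕ) ≠ k + 1 by omega, show k ≠ 0 by omega] using hu1
  · intro i h1 h2
    rcases Nat.lt_or_ge i k with hik | hik
    · have := hmid i h1 (by omega)
      simpa [show i ≠ k + 1 by omega, show i + 1 ≠ k + 1 by omega, show i ≠ k by omega] using this
    · have hik' : i = k := by omega
      subst hik'
      simpa [show i ≠ i + 1 by omega] using ⟨e1, e2, ne⟩

lemma dzero_petal {E bic : A → B → Prop} {p} (hp : p ∈ DZero E bic) :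
    ∃ (x : A ⊕ B) (l u : ℕ → A ⊕ B) (k : ℕ),
      IsPetal (EdgeSum E) (EdgeSum bic) x l u k ∧ l k = (toV p).1 ∧ u k = (toV p).2 := by
  match p with
  | Sum.inl (a, a') =>
    obtain ⟨z, h1, h2, h3⟩ := hp
    exact ⟨Sum.inr z, fun _ => Sum.inl a, fun _ => Sum.inl a', 1,
      ⟨one_pos, h1, ⟨h2, h3⟩, fun i hi1 hi0 => absurd (hi1.trans hi0) (by omega)⟩, rfl, rfl⟩
  | Sum.inr (b, b') =>
    obtain ⟨z, h1, h2, h3⟩ := hp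
    exact ⟨Sum.inl z, fun _ => Sum.inr b, fun _ => Sum.inr b', 1,
      ⟨one_pos, h1, ⟨h2, h3⟩, fun i hi1 hi0 => absurd (hi1.trans hi0) (by omega)⟩, rfl, rfl⟩

lemma dclosure_petal {E bic : A → B → Prop} {q} (hq : q ∈ DClosure E bic) :
    ∃ (x : A ⊕ B) (l u : ℕ → A ⊕ B) (k : ℕ),
      IsPetal (EdgeSum E) (EdgeSum bic) x l u k ∧ l k = (toV q).1 ∧ u k = (toV q).2 := by
  obtain ⟨p, hp, hwalk⟩ := hq
  induction hwalk with
  | refl => exact dzero_petal hp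
  | @tail b c hab hdom ih =>
    obtain ⟨x, l, u, k, hpet, hl, hu⟩ := ih
    match b, c with
    | Sum.inl (a, a'), Sum.inl _ => exact False.elim hdom
    | Sum.inr (a, a'), Sum.inr _ => exact False.elim hdom
    | Sum.inl (a, a'), Sum.inr (b0, b0') =>
      obtain ⟨e1, e2, e3⟩ := hdom
      refine ⟨x, _, _, k + 1,
        petal_extend hpet (w1 := Sum.inr b0) (w2 := Sum.inr b0') ?_ ?_ ?_, by simp [toV], by simp [toV]⟩
      · rw [hl]; exact e1
      · rw [hu]; exact e2
      · rw [hl]; exact e3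
    | Sum.inr (b0, b0'), Sum.inl (a, a') =>
      obtain ⟨e1, e2, e3⟩ := hdom
      refine ⟨x, _, _, k + 1,
        petal_extend hpet (w1 := Sum.inl a) (w2 := Sum.inl a') ?_ ?_ ?_, by simp [toV], by simp [toV]⟩
      · rw [hl]; exact e1
      · rw [hu]; exact e2
      · rw [hl]; exact e3

lemma petal_dclosure {E bic : A → B → Prop} {x : A ⊕ B} {l u : ℕ → A ⊕ B} {k : ℕ}
    (h : IsPetal (EdgeSum E) (EdgeSum bic) x l u k) :
    ∀ j, 1 ≤ j → j ≤ k → ∃ q ∈ DClosure E bic, toV q = (l j, u j) := by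
  intro j
  induction j with
  | zero => intro h1 _; omega
  | succ j ih =>
    intro _ hjk
    obtain ⟨hk, hb, ⟨hue, hnb⟩, hmid⟩ := h
    rcases Nat.eq_zero_or_pos j with rfl | hj
    · -- base case : j + 1 = 1
      rcases x with a | b
      · rcases hl1 : l 1 with a1 | b1
        · rw [hl1] at hb; exact False.elim hb
        · rcases hu1 : u 1 with a2 | b2
          · rw [hu1] at hue; exact False.elim hue
          · rw [hl1] at hb; rw [hu1] at hue hnb
            exact ⟨Sum.inr (b1, b2), ⟨Sum.inr (b1, b2), ⟨a, hb, hue, hnb⟩,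
              Relation.ReflTransGen.refl⟩, by simp [toV, hl1, hu1]⟩
      · rcases hl1 : l 1 with a1 | b1
        · rcases hu1 : u 1 with a2 | b2
          · rw [hl1] at hb; rw [hu1] at hue hnb
            exact ⟨Sum.inl (a1, a2), ⟨Sum.inl (a1, a2), ⟨b, hb, hue, hnb⟩,
              Relation.ReflTransGen.refl⟩, by simp [toV, hl1, hu1]⟩
          · rw [hu1] at hue; exact False.elim hue
        · rw [hl1] at hb; exact False.elim hb
    · obtain ⟨q, hq, htv⟩ := ih hj (by omega)
      obtain ⟨el, eu, nlu⟩ := hmid j hj (by omega)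
      obtain ⟨p0, hp0, hwalk⟩ := hq
      match q, htv with
      | Sum.inl (a, a'), htv =>
        have hlj : l j = Sum.inl a := (congrArg Prod.fst htv).symm
        have huj : u j = Sum.inl a' := (congrArg Prod.snd htv).symm
        rw [hlj] at el nlu; rw [huj] at eu
        rcases hl2 : l (j+1) with a1 | b1
        · rw [hl2] at el; exact False.elim el
        · rcases hu2 : u (j+1) with a2 | b2
          · rw [hu2] at eu; exact False.elim eu
          · rw [hl2] at el; rw [hu2] at eu nlu
            exact ⟨Sum.inr (b1, b2), ⟨p0, hp0, hwalk.tail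
              (show PairDom E (Sum.inl (a, a')) (Sum.inr (b1, b2)) from ⟨el, eu, nlu⟩)⟩,
              rfl⟩
      | Sum.inr (b, b'), htv =>
        have hlj : l j = Sum.inr b := (congrArg Prod.fst htv).symm
        have huj : u j = Sum.inr b' := (congrArg Prod.snd htv).symm
        rw [hlj] at el nlu; rw [huj] at eu
        rcases hl2 : l (j+1) with a1 | b1
        · rcases hu2 : u (j+1) with a2 | b2
          · rw [hl2] at el; rw [hu2] at eu nlu
            exact ⟨Sum.inl (a1, a2), ⟨p0, hp0, hwalk.tail
              (show PairDom E (Sum.inr (b, b')) (Sum.inl (a1, a2)) from ⟨el, eu, nlu⟩)⟩,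
              rfl⟩
          · rw [hu2] at eu; exact False.elim eu
        · rw [hl2] at el; exact False.elim el

/-- for a weakly balanced bipartite signed graph (no purely red edges),
the reachability closure `D` of `D_0` contains a circuit if and only if the signed
graph contains a flower. -/
theorem statement6 [Fintype A] [Fintype B] (E bic : A → B → Prop)
    (hbic : ∀ a b, bic a b → E a b) :
    HasCircuit (DClosure E bic) ↔ HasFlower (EdgeSum E) (EdgeSum bic) := by
  constructor
  · rintro ⟨n, hn, hcirc⟩
    rcases hcirc with ⟨x, hx⟩ | ⟨x, hx⟩
    · choose xc l u k hpet hl hu using fun i => dclosure_petal (hx i)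
      refine ⟨n, xc, l, u, k, hpet, fun i => ?_⟩
      rw [hu i, hl (i + 1)]; rfl
    · choose xc l u k hpet hl hu using fun i => dclosure_petal (hx i)
      refine ⟨n, xc, l, u, k, hpet, fun i => ?_⟩
      rw [hu i, hl (i + 1)]; rfl
  · rintro ⟨n, xs, l, u, k, hpet, hterm⟩
    have hmem : ∀ i, ∃ q ∈ DClosure E bic, toV q = (l i (k i), u i (k i)) :=
      fun i => petal_dclosure (hpet i) (k i) (hpet i).1 le_rfl
    choose q hq htv using hmem
    have hlink : ∀ i, (toV (q i)).2 = (toV (q (i + 1))).1 := by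
      intro i
      rw [htv i, htv (i + 1)]
      exact hterm i
    have hside : (∀ i, ∃ p, q i = Sum.inl p) ∨ (∀ i, ∃ p, q i = Sum.inr p) := by
      rcases hq0 : q 0 with p0 | p0
      · left
        intro i
        induction i using Fin.induction with
        | zero => exact ⟨p0, hq0⟩
        | succ i ih =>
          obtain ⟨p, hp⟩ := ih
          have hlk := hlink i.castSucc
          rw [hp, Fin.coeSucc_eq_succ] at hlk
          rcases hqi : q i.succ with p' | p'
          · exact ⟨p', rfl⟩
          · exact absurd hlk (by rcases p with ⟨a, a'⟩; rcases p' with ⟨b, b'⟩; simp [toV, hqi])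
      · right
        intro i
        induction i using Fin.induction with
        | zero => exact ⟨p0, hq0⟩
        | succ i ih =>
          obtain ⟨p, hp⟩ := ih
          have hlk := hlink i.castSucc
          rw [hp, Fin.coeSucc_eq_succ] at hlk
          rcases hqi : q i.succ with p' | p'
          · exact absurd hlk (by rcases p with ⟨a, a'⟩; rcases p' with ⟨b, b'⟩; simp [toV, hqi])
          · exact ⟨p', rfl⟩
    have etoV1 : ∀ pr : A × A, toV (A := A) (B := B) (Sum.inl pr) =
        (Sum.inl pr.1, Sum.inl pr.2) := fun pr => by rcases pr with ⟨a, a'⟩; rfl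
    have etoV2 : ∀ pr : B × B, toV (A := A) (B := B) (Sum.inr pr) =
        (Sum.inr pr.1, Sum.inr pr.2) := fun pr => by rcases pr with ⟨b, b'⟩; rfl
    rcases hside with hside | hside
    · choose p hp using hside
      have hlink2 : ∀ i, (p i).2 = (p (i + 1)).1 := by
        intro i
        have h2 := hlink i
        rw [hp i, hp (i + 1), etoV1, etoV1] at h2
        exact Sum.inl.inj h2
      have hxmem : ∀ i, Sum.inl ((p i).1, (p (i + 1)).1) ∈ DClosure E bic := by
        intro i
        have hpe : ((p i).1, (p (i + 1)).1) = p i := by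
          rw [← hlink2 i]
        rw [hpe, ← hp i]
        exact hq i
      rcases Nat.eq_zero_or_pos n with rfl | hn
      · refine ⟨1, one_pos, Or.inl ⟨fun _ => (p 0).1, fun i => ?_⟩⟩
        have h01 : ((0 : Fin 1) + 1) = 0 := Subsingleton.elim _ _
        have := hxmem 0
        rw [h01] at this
        exact this
      · exact ⟨n, hn, Or.inl ⟨fun i => (p i).1, hxmem⟩⟩
    · choose p hp using hside
      have hlink2 : ∀ i, (p i).2 = (p (i + 1)).1 := by
        intro i
        have h2 := hlink i
        rw [hp i, hp (i + 1), etoV2, etoV2] at h2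
        exact Sum.inr.inj h2
      have hxmem : ∀ i, Sum.inr ((p i).1, (p (i + 1)).1) ∈ DClosure E bic := by
        intro i
        have hpe : ((p i).1, (p (i + 1)).1) = p i := by
          rw [← hlink2 i]
        rw [hpe, ← hp i]
        exact hq i
      rcases Nat.eq_zero_or_pos n with rfl | hn
      · refine ⟨1, one_pos, Or.inr ⟨fun _ => (p 0).1, fun i => ?_⟩⟩
        have h01 : ((0 : Fin 1) + 1) = 0 := Subsingleton.elim _ _
        have := hxmem 0
        rw [h01] at this
        exact this
      · exact ⟨n, hn, Or.inr ⟨fun i => (p i).1, hxmem⟩⟩
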